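/- In the isotropic case Σ = I with X having singular values λ_1 ≥ … ≥ λ_n > 0 and ρλ_1²/d < 1, P(A(ρ)) − P(A(0)) = (ρ²/(d/n))·(1/n) Σ_{i=1}^n σ⁴ (λ_i²/d) / ((1 − ρλ_i²/d)² (λ_i²/d + σ²)). -/

import Mathlib

open Matrix

/-- Squared Frobenius norm. -/
noncomputable def frobSq {m k : ℕ} (A : Matrix (Fin m) (Fin k) ℝ) : ℝ :=
  Matrix.trace (Aᵀ * A)

/-- The dual-optimal linear estimator matrix `A(ρ)` in the isotropic case `Σ = I`. -/
noncomputable def AdualIso (n d : ℕ) (X : Matrix (Fin n) (Fin d) ℝ)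
    (σ ρ : ℝ) : Matrix (Fin d) (Fin n) ℝ :=
  ((1 : Matrix (Fin d) (Fin d) ℝ)
      - (ρ * σ ^ 2) • ((1 : Matrix (Fin d) (Fin d) ℝ) - (ρ / (d : ℝ)) • (Xᵀ * X))⁻¹)
    * (Xᵀ * X + ((d : ℝ) * σ ^ 2) • 1)⁻¹ * Xᵀ

/-- Prediction error functional in the isotropic case:
`P(A) = (1/d)‖AX − I‖_F² + σ²‖A‖_F²`. -/
noncomputable def predErrIso (n d : ℕ) (X : Matrix (Fin n) (Fin d) ℝ)
    (σ : ℝ) (A : Matrix (Fin d) (Fin n) ℝ) : ℝ :=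
  (1 / (d : ℝ)) * frobSq (A * X - 1) + σ ^ 2 * frobSq A

section Aux

variable {n d : ℕ}

lemma Udiag_mul (U : Matrix (Fin n) (Fin n) ℝ) (hU2 : Uᵀ * U = 1) (v w : Fin n → ℝ) :
    (U * diagonal v * Uᵀ) * (U * diagonal w * Uᵀ)
      = U * diagonal (fun i => v i * w i) * Uᵀ := by
  have h : diagonal v * (Uᵀ * U) * diagonal w = diagonal (fun i => v i * w i) := by
    rw [hU2, Matrix.mul_one, diagonal_mul_diagonal]
  calc (U * diagonal v * Uᵀ) * (U * diagonal w * Uᵀ)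
      = U * (diagonal v * (Uᵀ * U) * diagonal w) * Uᵀ := by
        simp only [Matrix.mul_assoc]
    _ = U * diagonal (fun i => v i * w i) * Uᵀ := by rw [h]

lemma Udiag_mul_one (U : Matrix (Fin n) (Fin n) ℝ) (hU1 : U * Uᵀ = 1) (hU2 : Uᵀ * U = 1)
    (v w : Fin n → ℝ) (hvw : ∀ i, v i * w i = 1) :
    (U * diagonal v * Uᵀ) * (U * diagonal w * Uᵀ) = 1 := by
  rw [Udiag_mul U hU2, show (fun i => v i * w i) = fun _ => (1:ℝ) from funext hvw,
    diagonal_one, Matrix.mul_one, hU1]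

lemma Udiag_trace (U : Matrix (Fin n) (Fin n) ℝ) (hU2 : Uᵀ * U = 1) (v : Fin n → ℝ) :
    trace (U * diagonal v * Uᵀ) = ∑ i, v i := by
  rw [Matrix.trace_mul_comm, ← Matrix.mul_assoc, hU2, Matrix.one_mul, Matrix.trace_diagonal]

lemma key_scalar (σ ρ dd lam : ℝ) (hdd : dd ≠ 0)
    (h1 : 1 - ρ / dd * lam ^ 2 ≠ 0) (h3 : lam ^ 2 + dd * σ ^ 2 ≠ 0) :
    (1/dd) * (((1 - ρ * σ ^ 2 * (1 - ρ / dd * lam ^ 2)⁻¹) * (lam ^ 2 + dd * σ ^ 2)⁻¹) ^ 2 * lam ^ 4)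
      - (2/dd) * (((1 - ρ * σ ^ 2 * (1 - ρ / dd * lam ^ 2)⁻¹) * (lam ^ 2 + dd * σ ^ 2)⁻¹) * lam ^ 2)
      + σ ^ 2 * (((1 - ρ * σ ^ 2 * (1 - ρ / dd * lam ^ 2)⁻¹) * (lam ^ 2 + dd * σ ^ 2)⁻¹) ^ 2 * lam ^ 2)
      - ((1/dd) * (((1 - 0 * σ ^ 2 * (1 - 0 / dd * lam ^ 2)⁻¹) * (lam ^ 2 + dd * σ ^ 2)⁻¹) ^ 2 * lam ^ 4)
      - (2/dd) * (((1 - 0 * σ ^ 2 * (1 - 0 / dd * lam ^ 2)⁻¹) * (lam ^ 2 + dd * σ ^ 2)⁻¹) * lam ^ 2)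
      + σ ^ 2 * (((1 - 0 * σ ^ 2 * (1 - 0 / dd * lam ^ 2)⁻¹) * (lam ^ 2 + dd * σ ^ 2)⁻¹) ^ 2 * lam ^ 2))
      = ρ ^ 2 / dd * (σ ^ 4 * (lam ^ 2 / dd) / ((1 - ρ * lam ^ 2 / dd) ^ 2 * (lam ^ 2 / dd + σ ^ 2))) := by
  have e0 : 1 - ρ / dd * lam ^ 2 = (dd - ρ * lam ^ 2) / dd := by field_simp
  have h4 : dd - ρ * lam ^ 2 ≠ 0 := by
    intro h
    apply h1
    rw [e0, h, zero_div]
  have e0' : 1 - ρ * lam ^ 2 / dd = (dd - ρ * lam ^ 2) / dd := by field_simp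
  have e2 : lam ^ 2 / dd + σ ^ 2 = (lam ^ 2 + dd * σ ^ 2) / dd := by field_simp
  rw [e0, e0', e2, inv_div]
  norm_num
  field_simp
  ring

lemma Adual_eq (X : Matrix (Fin n) (Fin d) ℝ) (U : Matrix (Fin n) (Fin n) ℝ)
    (σ ρ : ℝ) (hd : (d:ℝ) ≠ 0) (hσ : σ ≠ 0)
    (l : Fin n → ℝ)
    (hU1 : U * Uᵀ = 1) (hU2 : Uᵀ * U = 1)
    (hsvd : X * Xᵀ = U * diagonal (fun i => l i ^ 2) * Uᵀ)
    (hq : ∀ i, l i ^ 2 + (d:ℝ) * σ ^ 2 ≠ 0)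
    (hq' : ∀ i, 1 - ρ / (d:ℝ) * l i ^ 2 ≠ 0) :
    AdualIso n d X σ ρ
      = Xᵀ * (U * diagonal (fun i =>
          (1 - ρ * σ ^ 2 * (1 - ρ / (d:ℝ) * l i ^ 2)⁻¹) * (l i ^ 2 + (d:ℝ) * σ ^ 2)⁻¹) * Uᵀ) := by
  have hc : ((d:ℝ) * σ ^ 2) ≠ 0 := mul_ne_zero hd (pow_ne_zero 2 hσ)
  set Qi := U * diagonal (fun i => (l i ^ 2 + (d:ℝ) * σ ^ 2)⁻¹) * Uᵀ with hQidef
  set Qi' := U * diagonal (fun i => (1 - ρ/(d:ℝ) * l i ^ 2)⁻¹) * Uᵀ with hQi'def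
  have hsmc : ((d:ℝ) * σ ^ 2) • (1 : Matrix (Fin n) (Fin n) ℝ)
      = U * (((d:ℝ) * σ ^ 2) • (1 : Matrix (Fin n) (Fin n) ℝ)) * Uᵀ := by
    rw [Matrix.mul_smul, Matrix.mul_one, Matrix.smul_mul, hU1]
  have hQ : X * Xᵀ + ((d:ℝ) * σ ^ 2) • 1
      = U * diagonal (fun i => l i ^ 2 + (d:ℝ) * σ ^ 2) * Uᵀ := by
    have h1 : diagonal (fun i : Fin n => l i ^ 2 + (d:ℝ) * σ ^ 2)
        = diagonal (fun i => l i ^ 2) + ((d:ℝ) * σ ^ 2) • (1 : Matrix (Fin n) (Fin n) ℝ) := by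
      rw [← diagonal_one, ← diagonal_smul, diagonal_add]
      congr 1
      funext i
      simp
    rw [h1, Matrix.mul_add, Matrix.add_mul, hsvd]
    congr 1
  have hQ' : (1 : Matrix (Fin n) (Fin n) ℝ) - (ρ/(d:ℝ)) • (X * Xᵀ)
      = U * diagonal (fun i => 1 - ρ/(d:ℝ) * l i ^ 2) * Uᵀ := by
    have h1 : diagonal (fun i : Fin n => 1 - ρ/(d:ℝ) * l i ^ 2)
        = (1 : Matrix (Fin n) (Fin n) ℝ) - (ρ/(d:ℝ)) • diagonal (fun i => l i ^ 2) := by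
      rw [← diagonal_one, ← diagonal_smul, diagonal_sub]
      congr 1
    rw [h1, Matrix.mul_sub, Matrix.sub_mul, hsvd]
    congr 1
    · rw [Matrix.mul_one, hU1]
    · rw [Matrix.mul_smul, Matrix.smul_mul]
  have hQQi : (X * Xᵀ + ((d:ℝ) * σ ^ 2) • 1) * Qi = 1 := by
    rw [hQ, hQidef]
    exact Udiag_mul_one U hU1 hU2 _ _ (fun i => mul_inv_cancel₀ (hq i))
  have hQiQ : Qi * (X * Xᵀ + ((d:ℝ) * σ ^ 2) • 1) = 1 := by
    rw [hQ, hQidef]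
    exact Udiag_mul_one U hU1 hU2 _ _ (fun i => inv_mul_cancel₀ (hq i))
  have hQ'Qi' : ((1 : Matrix (Fin n) (Fin n) ℝ) - (ρ/(d:ℝ)) • (X * Xᵀ)) * Qi' = 1 := by
    rw [hQ', hQi'def]
    exact Udiag_mul_one U hU1 hU2 _ _ (fun i => mul_inv_cancel₀ (hq' i))
  have hQi'Q' : Qi' * ((1 : Matrix (Fin n) (Fin n) ℝ) - (ρ/(d:ℝ)) • (X * Xᵀ)) = 1 := by
    rw [hQ', hQi'def]
    exact Udiag_mul_one U hU1 hU2 _ _ (fun i => inv_mul_cancel₀ (hq' i))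
  -- push-through for P = XᵀX + c•1
  have hPXt : (Xᵀ * X + ((d:ℝ) * σ ^ 2) • 1) * Xᵀ = Xᵀ * (X * Xᵀ + ((d:ℝ) * σ ^ 2) • 1) := by
    simp only [Matrix.add_mul, Matrix.mul_add, Matrix.smul_mul, Matrix.mul_smul,
      Matrix.one_mul, Matrix.mul_one, Matrix.mul_assoc]
  have hPR : (Xᵀ * X + ((d:ℝ) * σ ^ 2) • 1)
      * (((d:ℝ) * σ ^ 2)⁻¹ • ((1 : Matrix (Fin d) (Fin d) ℝ) - Xᵀ * Qi * X)) = 1 := by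
    have h2 : (Xᵀ * X + ((d:ℝ) * σ ^ 2) • 1) * (Xᵀ * Qi * X) = Xᵀ * X := by
      calc (Xᵀ * X + ((d:ℝ) * σ ^ 2) • 1) * (Xᵀ * Qi * X)
          = ((Xᵀ * X + ((d:ℝ) * σ ^ 2) • 1) * Xᵀ) * (Qi * X) := by
            simp only [Matrix.mul_assoc]
        _ = (Xᵀ * (X * Xᵀ + ((d:ℝ) * σ ^ 2) • 1)) * (Qi * X) := by rw [hPXt]
        _ = Xᵀ * (((X * Xᵀ + ((d:ℝ) * σ ^ 2) • 1) * Qi) * X) := by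
            simp only [Matrix.mul_assoc]
        _ = Xᵀ * X := by rw [hQQi, Matrix.one_mul]
    rw [Matrix.mul_smul, Matrix.mul_sub, Matrix.mul_one, h2, add_sub_cancel_left,
      smul_smul, inv_mul_cancel₀ hc, one_smul]
  have hPinvXt : (Xᵀ * X + ((d:ℝ) * σ ^ 2) • 1)⁻¹ * Xᵀ = Xᵀ * Qi := by
    rw [Matrix.inv_eq_right_inv hPR]
    have h3 : Qi * (X * Xᵀ) = 1 - ((d:ℝ) * σ ^ 2) • Qi := by
      have h := hQiQ
      rw [Matrix.mul_add, Matrix.mul_smul, Matrix.mul_one] at h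
      rw [← h, add_sub_cancel_right]
    calc (((d:ℝ) * σ ^ 2)⁻¹ • ((1 : Matrix (Fin d) (Fin d) ℝ) - Xᵀ * Qi * X)) * Xᵀ
        = ((d:ℝ) * σ ^ 2)⁻¹ • (Xᵀ - Xᵀ * (Qi * (X * Xᵀ))) := by
          simp only [Matrix.smul_mul, Matrix.sub_mul, Matrix.one_mul, Matrix.mul_assoc]
      _ = ((d:ℝ) * σ ^ 2)⁻¹ • (((d:ℝ) * σ ^ 2) • (Xᵀ * Qi)) := by
          rw [h3, Matrix.mul_sub, Matrix.mul_one, Matrix.mul_smul, sub_sub_cancel]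
      _ = Xᵀ * Qi := by rw [smul_smul, inv_mul_cancel₀ hc, one_smul]
  -- push-through for P' = 1 - (ρ/d)•XᵀX
  have hP'Xt : ((1 : Matrix (Fin d) (Fin d) ℝ) - (ρ/(d:ℝ)) • (Xᵀ * X)) * Xᵀ
      = Xᵀ * ((1 : Matrix (Fin n) (Fin n) ℝ) - (ρ/(d:ℝ)) • (X * Xᵀ)) := by
    simp only [Matrix.sub_mul, Matrix.mul_sub, Matrix.one_mul, Matrix.mul_one,
      Matrix.smul_mul, Matrix.mul_smul, Matrix.mul_assoc]
  have hP'R' : ((1 : Matrix (Fin d) (Fin d) ℝ) - (ρ/(d:ℝ)) • (Xᵀ * X))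
      * ((1 : Matrix (Fin d) (Fin d) ℝ) + (ρ/(d:ℝ)) • (Xᵀ * Qi' * X)) = 1 := by
    have h4 : ((1 : Matrix (Fin d) (Fin d) ℝ) - (ρ/(d:ℝ)) • (Xᵀ * X)) * (Xᵀ * Qi' * X)
        = Xᵀ * X := by
      calc ((1 : Matrix (Fin d) (Fin d) ℝ) - (ρ/(d:ℝ)) • (Xᵀ * X)) * (Xᵀ * Qi' * X)
          = (((1 : Matrix (Fin d) (Fin d) ℝ) - (ρ/(d:ℝ)) • (Xᵀ * X)) * Xᵀ) * (Qi' * X) := by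
            simp only [Matrix.mul_assoc]
        _ = (Xᵀ * ((1 : Matrix (Fin n) (Fin n) ℝ) - (ρ/(d:ℝ)) • (X * Xᵀ))) * (Qi' * X) := by
            rw [hP'Xt]
        _ = Xᵀ * ((((1 : Matrix (Fin n) (Fin n) ℝ) - (ρ/(d:ℝ)) • (X * Xᵀ)) * Qi') * X) := by
            simp only [Matrix.mul_assoc]
        _ = Xᵀ * X := by rw [hQ'Qi', Matrix.one_mul]
    rw [Matrix.mul_add, Matrix.mul_one, Matrix.mul_smul, h4]
    abel
  have hP'invXt : ((1 : Matrix (Fin d) (Fin d) ℝ) - (ρ/(d:ℝ)) • (Xᵀ * X))⁻¹ * Xᵀ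
      = Xᵀ * Qi' := by
    rw [Matrix.inv_eq_right_inv hP'R']
    have h5 : (ρ/(d:ℝ)) • (Qi' * (X * Xᵀ)) = Qi' - 1 := by
      have h := hQi'Q'
      rw [Matrix.mul_sub, Matrix.mul_one, Matrix.mul_smul] at h
      rw [← h]
      abel
    calc ((1 : Matrix (Fin d) (Fin d) ℝ) + (ρ/(d:ℝ)) • (Xᵀ * Qi' * X)) * Xᵀ
        = Xᵀ + (ρ/(d:ℝ)) • (Xᵀ * (Qi' * (X * Xᵀ))) := by
          simp only [Matrix.add_mul, Matrix.one_mul, Matrix.smul_mul, Matrix.mul_assoc]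
      _ = Xᵀ + Xᵀ * ((ρ/(d:ℝ)) • (Qi' * (X * Xᵀ))) := by rw [Matrix.mul_smul]
      _ = Xᵀ + Xᵀ * (Qi' - 1) := by rw [h5]
      _ = Xᵀ * Qi' := by rw [Matrix.mul_sub, Matrix.mul_one]; abel
  -- assemble
  unfold AdualIso
  rw [Matrix.mul_assoc, hPinvXt, Matrix.sub_mul, Matrix.one_mul, Matrix.smul_mul,
    ← Matrix.mul_assoc (((1 : Matrix (Fin d) (Fin d) ℝ) - (ρ/(d:ℝ)) • (Xᵀ * X))⁻¹) Xᵀ Qi,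
    hP'invXt, Matrix.mul_assoc Xᵀ Qi' Qi, ← Matrix.mul_smul, ← Matrix.mul_sub]
  congr 1
  rw [hQi'def, hQidef, Udiag_mul U hU2]
  have hdiag : diagonal (fun i =>
        (1 - ρ * σ ^ 2 * (1 - ρ / (d:ℝ) * l i ^ 2)⁻¹) * (l i ^ 2 + (d:ℝ) * σ ^ 2)⁻¹)
      = diagonal (fun i => (l i ^ 2 + (d:ℝ) * σ ^ 2)⁻¹)
        - (ρ * σ ^ 2) • diagonal (fun i => (1 - ρ/(d:ℝ) * l i ^ 2)⁻¹ * (l i ^ 2 + (d:ℝ) * σ ^ 2)⁻¹) := by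
    ext i j
    by_cases h : i = j
    · subst h
      simp only [Matrix.diagonal_apply_eq, Matrix.sub_apply, Matrix.smul_apply,
        smul_eq_mul]
      ring
    · simp [Matrix.diagonal_apply_ne _ h]
  rw [hdiag, Matrix.mul_sub, Matrix.sub_mul, Matrix.mul_smul, Matrix.smul_mul]

lemma predErr_eq (X : Matrix (Fin n) (Fin d) ℝ) (U : Matrix (Fin n) (Fin n) ℝ)
    (σ : ℝ) (hd : (d:ℝ) ≠ 0) (l : Fin n → ℝ)
    (hU1 : U * Uᵀ = 1) (hU2 : Uᵀ * U = 1)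
    (hsvd : X * Xᵀ = U * diagonal (fun i => l i ^ 2) * Uᵀ)
    (g : Fin n → ℝ) :
    predErrIso n d X σ (Xᵀ * (U * diagonal g * Uᵀ)) =
      (∑ i, ((1/(d:ℝ)) * (g i ^ 2 * l i ^ 4) - (2/(d:ℝ)) * (g i * l i ^ 2)
          + σ ^ 2 * (g i ^ 2 * l i ^ 2))) + 1 := by
  have hBt : (U * diagonal g * Uᵀ)ᵀ = U * diagonal g * Uᵀ := by
    simp only [Matrix.transpose_mul, Matrix.transpose_transpose, diagonal_transpose,
      Matrix.mul_assoc]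
  have hA : frobSq (Xᵀ * (U * diagonal g * Uᵀ)) = ∑ i, g i * l i ^ 2 * g i := by
    unfold frobSq
    have h1 : (Xᵀ * (U * diagonal g * Uᵀ))ᵀ * (Xᵀ * (U * diagonal g * Uᵀ))
        = ((U * diagonal g * Uᵀ) * (X * Xᵀ)) * (U * diagonal g * Uᵀ) := by
      rw [Matrix.transpose_mul, Matrix.transpose_transpose, hBt]
      simp only [Matrix.mul_assoc]
    rw [h1, hsvd, Udiag_mul U hU2, Udiag_mul U hU2, Udiag_trace U hU2]
  set K := Xᵀ * (U * diagonal g * Uᵀ) * X with hK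
  have hKtr : trace K = ∑ i, l i ^ 2 * g i := by
    rw [hK, Matrix.trace_mul_comm, ← Matrix.mul_assoc, hsvd, Udiag_mul U hU2,
      Udiag_trace U hU2]
  have hKK : trace (K * K) = ∑ i, g i * l i ^ 2 * (g i * l i ^ 2) := by
    rw [hK]
    have h1 : (Xᵀ * (U * diagonal g * Uᵀ) * X) * (Xᵀ * (U * diagonal g * Uᵀ) * X)
        = Xᵀ * ((((U * diagonal g * Uᵀ) * (X * Xᵀ)) * ((U * diagonal g * Uᵀ) * X))) := by
      simp only [Matrix.mul_assoc]
    rw [h1, Matrix.trace_mul_comm]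
    have h2 : (((U * diagonal g * Uᵀ) * (X * Xᵀ)) * ((U * diagonal g * Uᵀ) * X)) * Xᵀ
        = ((U * diagonal g * Uᵀ) * (X * Xᵀ)) * ((U * diagonal g * Uᵀ) * (X * Xᵀ)) := by
      simp only [Matrix.mul_assoc]
    rw [h2, hsvd, Udiag_mul U hU2, Udiag_mul U hU2, Udiag_trace U hU2]
  have hKt : Kᵀ = K := by
    rw [hK]
    simp only [Matrix.transpose_mul, Matrix.transpose_transpose, diagonal_transpose,
      Matrix.mul_assoc]
  have hfro : frobSq (K - 1) = trace (K * K) - 2 * trace K + (d:ℝ) := by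
    unfold frobSq
    rw [Matrix.transpose_sub, Matrix.transpose_one, hKt]
    simp only [Matrix.sub_mul, Matrix.mul_sub, Matrix.mul_one, Matrix.one_mul,
      Matrix.trace_sub, Matrix.trace_one, Fintype.card_fin]
    ring
  unfold predErrIso
  rw [← hK, hfro, hA, hKK, hKtr]
  rw [Finset.sum_add_distrib, Finset.sum_sub_distrib, ← Finset.mul_sum, ← Finset.mul_sum,
    ← Finset.mul_sum]
  have e1 : ∑ i, g i * l i ^ 2 * (g i * l i ^ 2) = ∑ i, g i ^ 2 * l i ^ 4 :=
    Finset.sum_congr rfl fun i _ => by ring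
  have e2 : ∑ i, l i ^ 2 * g i = ∑ i, g i * l i ^ 2 :=
    Finset.sum_congr rfl fun i _ => by ring
  have e3 : ∑ i, g i * l i ^ 2 * g i = ∑ i, g i ^ 2 * l i ^ 2 :=
    Finset.sum_congr rfl fun i _ => by ring
  rw [e1, e2, e3]
  field_simp
  ring

end Aux

set_option maxHeartbeats 1000000 in
/-- In the isotropic case, with singular values `λ₁ ≥ … ≥ λₙ > 0` of `X` and
`ρ λ₁²/d < 1`,
`P(A(ρ)) − P(A(0)) = (ρ²/(d/n))·(1/n) ∑ᵢ σ⁴ (λᵢ²/d) / ((1 − ρλᵢ²/d)² (λᵢ²/d + σ²))`. -/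
theorem stmt8 (n d : ℕ) (hn : 0 < n) (hnd : n ≤ d) (hd : 0 < d)
    (X : Matrix (Fin n) (Fin d) ℝ)
    (σ ρ : ℝ) (hσ : 0 < σ) (hρ : 0 ≤ ρ)
    (l : Fin n → ℝ) (hlpos : ∀ i, 0 < l i) (hlmono : Antitone l)
    (U : Matrix (Fin n) (Fin n) ℝ) (hU : U * Uᵀ = 1 ∧ Uᵀ * U = 1)
    (hsvd : X * Xᵀ = U * Matrix.diagonal (fun i => (l i) ^ 2) * Uᵀ)
    (hedge : ρ * (l ⟨0, hn⟩) ^ 2 / (d : ℝ) < 1) :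
    predErrIso n d X σ (AdualIso n d X σ ρ) - predErrIso n d X σ (AdualIso n d X σ 0)
      = (ρ ^ 2 / ((d : ℝ) / (n : ℝ))) * ((1 / (n : ℝ)) *
          ∑ i, σ ^ 4 * ((l i) ^ 2 / (d : ℝ)) /
            ((1 - ρ * (l i) ^ 2 / (d : ℝ)) ^ 2 * ((l i) ^ 2 / (d : ℝ) + σ ^ 2))) := by
  obtain ⟨hU1, hU2⟩ := hU
  have hdR : ((d:ℝ)) ≠ 0 := Nat.cast_ne_zero.mpr hd.ne'
  have hdpos : (0:ℝ) < (d:ℝ) := Nat.cast_pos.mpr hd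
  have hnR : ((n:ℝ)) ≠ 0 := Nat.cast_ne_zero.mpr hn.ne'
  have hσ' : σ ≠ 0 := hσ.ne'
  have hq : ∀ i, l i ^ 2 + (d:ℝ) * σ ^ 2 ≠ 0 := fun i => by positivity
  have hlt : ∀ i, ρ * l i ^ 2 / (d:ℝ) < 1 := by
    intro i
    have h0 : (⟨0, hn⟩ : Fin n) ≤ i := by simp [Fin.le_def]
    have hl := hlmono h0
    have h1 : l i ^ 2 ≤ l ⟨0, hn⟩ ^ 2 := pow_le_pow_left₀ (hlpos i).le hl 2
    calc ρ * l i ^ 2 / (d:ℝ) ≤ ρ * l ⟨0, hn⟩ ^ 2 / (d:ℝ) := by gcongr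
      _ < 1 := hedge
  have hq'ρ : ∀ i, 1 - ρ / (d:ℝ) * l i ^ 2 ≠ 0 := by
    intro i
    have := hlt i
    have h2 : ρ / (d:ℝ) * l i ^ 2 = ρ * l i ^ 2 / (d:ℝ) := by ring
    rw [h2]
    intro hcon
    nlinarith
  have hq'0 : ∀ i, 1 - (0:ℝ) / (d:ℝ) * l i ^ 2 ≠ 0 := fun i => by norm_num
  rw [Adual_eq X U σ ρ hdR hσ' l hU1 hU2 hsvd hq hq'ρ,
    Adual_eq X U σ 0 hdR hσ' l hU1 hU2 hsvd hq hq'0,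
    predErr_eq X U σ hdR l hU1 hU2 hsvd _,
    predErr_eq X U σ hdR l hU1 hU2 hsvd _,
    add_sub_add_right_eq_sub, ← Finset.sum_sub_distrib]
  have hRHS : (ρ ^ 2 / ((d:ℝ) / (n:ℝ))) * ((1 / (n:ℝ)) *
      ∑ i, σ ^ 4 * ((l i) ^ 2 / (d:ℝ)) /
        ((1 - ρ * (l i) ^ 2 / (d:ℝ)) ^ 2 * ((l i) ^ 2 / (d:ℝ) + σ ^ 2)))
      = ∑ i, (ρ ^ 2 / (d:ℝ)) * (σ ^ 4 * ((l i) ^ 2 / (d:ℝ)) /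
        ((1 - ρ * (l i) ^ 2 / (d:ℝ)) ^ 2 * ((l i) ^ 2 / (d:ℝ) + σ ^ 2))) := by
    rw [← Finset.mul_sum, ← mul_assoc]
    congr 1
    field_simp
  rw [hRHS]
  exact Finset.sum_congr rfl fun i _ => key_scalar σ ρ (d:ℝ) (l i) hdR (hq'ρ i) (hq i)
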